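/- Let (S, •, q) be a symmetric composition superalgebra and let φ be an automorphism of S with φ³ = id. Then φ is an isometry of q, and the new multiplication x ∗ y = φ(x) • φ²(y) makes (S, ∗, q) again a symmetric composition superalgebra. -/

import Mathlib

/-- The multiplicativity identities of a composition superalgebra. -/
def IsCompositionSuper (k A : Type*) [Field k] [AddCommGroup A] [Module k A]
    (mul : A → A → A) (gr : ZMod 2 → Submodule k A)
    (bf : LinearMap.BilinForm k A) (q0 : A → k) : Prop :=
  (∀ x y : A, x ∈ gr 0 → y ∈ gr 0 → q0 (mul x y) = q0 x * q0 y) ∧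
  (∀ x y z : A, x ∈ gr 0 →
      bf (mul x y) (mul x z) = q0 x * bf y z ∧
      bf (mul y x) (mul z x) = q0 x * bf y z) ∧
  (∀ (a b c d : ZMod 2) (x y z t : A),
      x ∈ gr a → y ∈ gr b → z ∈ gr c → t ∈ gr d →
      bf (mul x y) (mul z t)
        + ((-1 : k) ^ (a.val * b.val + a.val * c.val + b.val * c.val)) *
            bf (mul z y) (mul x t)
        = ((-1 : k) ^ (b.val * c.val)) * (bf x z * bf y t))

/-- If `(S,•,q)` is a symmetric composition superalgebra and `φ` an automorphism
with `φ³ = id`, then `φ` is an isometry of `q` and `x ∗ y = φ(x) • φ²(y)` makes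
`(S,∗,q)` again a symmetric composition superalgebra. -/
theorem stmt6 (k A : Type*) [Field k] [AddCommGroup A] [Module k A]
    (mul : A → A → A) (gr : ZMod 2 → Submodule k A)
    (hint : DirectSum.IsInternal gr)
    (bf : LinearMap.BilinForm k A) (q0 : A → k)
    (hadd₁ : ∀ x x' y, mul (x + x') y = mul x y + mul x' y)
    (hadd₂ : ∀ x y y', mul x (y + y') = mul x y + mul x y')
    (hsmul₁ : ∀ (c : k) x y, mul (c • x) y = c • mul x y)
    (hsmul₂ : ∀ (c : k) x y, mul x (c • y) = c • mul x y)
    (hgrmul : ∀ (a b : ZMod 2) (x y : A), x ∈ gr a → y ∈ gr b → mul x y ∈ gr (a + b))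
    (hnd : bf.Nondegenerate)
    (hcomp : IsCompositionSuper k A mul gr bf q0)
    (hsymm : ∀ x y z : A, bf (mul x y) z = bf x (mul y z))
    -- `φ` is an (even) automorphism of order dividing 3
    (φ : A ≃ₗ[k] A)
    (hφmul : ∀ x y, φ (mul x y) = mul (φ x) (φ y))
    (hφgr : ∀ p, Submodule.map (φ : A →ₗ[k] A) (gr p) = gr p)
    (hφ3 : ∀ x, φ (φ (φ x)) = x) :
    -- `φ` is an isometry of `q`
    (∀ x y, bf (φ x) (φ y) = bf x y) ∧
    (∀ x ∈ gr 0, q0 (φ x) = q0 x) ∧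
    -- `(S,∗,q)` is again a symmetric composition superalgebra
    IsCompositionSuper k A (fun x y => mul (φ x) (φ (φ y))) gr bf q0 ∧
    (∀ x y z : A, bf (mul (φ x) (φ (φ y))) z = bf x (mul (φ y) (φ (φ z)))) := by
  classical
  obtain ⟨hq, h2, h3⟩ := hcomp
  -- nondegeneracy as cancellation
  have hnd' : ∀ u v : A, (∀ t, bf u t = bf v t) → u = v := by
    intro u v h
    have h0 : u - v = 0 := by
      apply hnd.1
      intro t
      simp only [map_sub, LinearMap.sub_apply, h t, sub_self]
    exact sub_eq_zero.mp h0
  -- induction over the grading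
  have hall : ∀ (C : A → Prop), (∀ d, ∀ t ∈ gr d, C t) → C 0 →
      (∀ u v, C u → C v → C (u + v)) → ∀ t, C t := by
    intro C hmem h0 hadd t
    have ht : t ∈ ⨆ d, gr d := by
      rw [hint.submodule_iSup_eq_top]; trivial
    exact Submodule.iSup_induction (motive := C) _ ht hmem h0 hadd
  have hmem : ∀ p (x : A), x ∈ gr p → φ x ∈ gr p := by
    intro p x hx
    rw [← hφgr p]
    exact ⟨x, hx, rfl⟩
  -- (x•y)•x = q0 x • y for even x
  have key0 : ∀ x, x ∈ gr 0 → ∀ y, mul (mul x y) x = q0 x • y := by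
    intro x hx y
    apply hnd'
    intro t
    rw [hsymm, (h2 x y t hx).1, map_smul]
    simp [smul_eq_mul]
  -- q0 invariance
  have hq0 : ∀ x ∈ gr 0, q0 (φ x) = q0 x := by
    intro x hx
    by_cases hx0 : x = 0
    · subst hx0; rw [map_zero]
    · have h1 := congrArg φ (key0 x hx x)
      rw [hφmul, hφmul, map_smul, key0 (φ x) (hmem 0 x hx) (φ x)] at h1
      have hz : (q0 (φ x) - q0 x) • φ x = 0 := by
        rw [sub_smul, h1, sub_self]
      rcases smul_eq_zero.mp hz with h | h
      · exact sub_eq_zero.mp h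
      · exact absurd (φ.map_eq_zero_iff.mp h) hx0
  -- the key linearized identity
  have key : ∀ (a b c : ZMod 2) (x y z : A), x ∈ gr a → y ∈ gr b → z ∈ gr c →
      mul (mul x y) z
        + ((-1 : k) ^ (a.val * b.val + a.val * c.val + b.val * c.val)) • mul (mul z y) x
        = (((-1 : k) ^ (b.val * c.val)) * bf x z) • y := by
    intro a b c x y z hx hy hz
    apply hnd'
    refine hall (fun t => bf _ t = bf _ t) ?_ ?_ ?_
    · intro d t ht
      have h := h3 a b c d x y z t hx hy hz ht
      rw [← hsymm, ← hsymm] at h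
      simp only [map_add, map_smul, LinearMap.add_apply, LinearMap.smul_apply, smul_eq_mul]
      linear_combination h
    · simp
    · intro u v hu hv
      rw [map_add (bf _) u v, map_add (bf _) u v, hu, hv]
  -- isometry on homogeneous elements
  have isoh : ∀ (a c : ZMod 2) (x z : A), x ∈ gr a → z ∈ gr c →
      bf (φ x) (φ z) = bf x z := by
    intro a c x z hx hz
    by_cases hx0 : x = 0
    · subst hx0; simp
    · have h1 := congrArg φ (key a a c x x z hx hx hz)
      simp only [map_add, map_smul, hφmul] at h1
      rw [key a a c (φ x) (φ x) (φ z) (hmem _ _ hx) (hmem _ _ hx) (hmem _ _ hz)] at h1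
      have hz' : ((((-1 : k) ^ (a.val * c.val)) * bf (φ x) (φ z))
          - (((-1 : k) ^ (a.val * c.val)) * bf x z)) • φ x = 0 := by
        rw [sub_smul, h1, sub_self]
      rcases smul_eq_zero.mp hz' with h | h
      · have := sub_eq_zero.mp h
        exact mul_left_cancel₀ (pow_ne_zero _ (neg_ne_zero.mpr one_ne_zero)) this
      · exact absurd (φ.map_eq_zero_iff.mp h) hx0
  -- full isometry
  have iso : ∀ x z : A, bf (φ x) (φ z) = bf x z := by
    refine hall (fun x => ∀ z, bf (φ x) (φ z) = bf x z) ?_ ?_ ?_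
    · intro a x hx
      refine hall (fun z => bf (φ x) (φ z) = bf x z) ?_ ?_ ?_
      · intro c z hz; exact isoh a c x z hx hz
      · simp
      · intro u v hu hv; simp only [map_add, hu, hv]
    · intro z; simp
    · intro u v hu hv z
      simp only [map_add, LinearMap.add_apply, hu, hv]
  -- associativity of the form for the new product
  have hsymm' : ∀ x y z : A, bf (mul (φ x) (φ (φ y))) z = bf x (mul (φ y) (φ (φ z))) := by
    intro x y z
    calc bf (mul (φ x) (φ (φ y))) z
        = bf (φ x) (mul (φ (φ y)) z) := hsymm _ _ _
      _ = bf (φ (φ x)) (φ (mul (φ (φ y)) z)) := (iso _ _).symm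
      _ = bf (φ (φ x)) (mul y (φ z)) := by rw [hφmul, hφ3]
      _ = bf (mul (φ (φ x)) y) (φ z) := (hsymm _ _ _).symm
      _ = bf (φ (mul (φ (φ x)) y)) (φ (φ z)) := (iso _ _).symm
      _ = bf (mul x (φ y)) (φ (φ z)) := by rw [hφmul, hφ3]
      _ = bf x (mul (φ y) (φ (φ z))) := hsymm _ _ _
  refine ⟨iso, hq0, ⟨?_, ?_, ?_⟩, hsymm'⟩
  · intro x y hx hy
    show q0 (mul (φ x) (φ (φ y))) = q0 x * q0 y
    rw [hq (φ x) (φ (φ y)) (hmem _ _ hx) (hmem _ _ (hmem _ _ hy)), hq0 _ hx,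
      hq0 _ (hmem _ _ hy), hq0 _ hy]
  · intro x y z hx
    constructor
    · show bf (mul (φ x) (φ (φ y))) (mul (φ x) (φ (φ z))) = q0 x * bf y z
      rw [(h2 (φ x) (φ (φ y)) (φ (φ z)) (hmem _ _ hx)).1, hq0 _ hx, iso, iso]
    · have h := (h2 (φ (φ x)) (φ y) (φ z) (hmem _ _ (hmem _ _ hx))).2
      rw [hq0 _ (hmem _ _ hx), hq0 _ hx, iso] at h
      exact h
  · intro a b c d x y z t hx hy hz ht
    have h := h3 a b c d (φ x) (φ (φ y)) (φ z) (φ (φ t))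
      (hmem _ _ hx) (hmem _ _ (hmem _ _ hy)) (hmem _ _ hz) (hmem _ _ (hmem _ _ ht))
    simp only [iso] at h
    exact h
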